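/- Over an algebraically closed field with r ≠ 0, det(circ_r(c_0, ..., c_{n−1})) = Π_{ω: ω^n = r} (c_0 + c_1·ω + ⋯ + c_{n−1}·ω^{n−1}), the product taken over all n-th roots ω of r. -/

import Mathlib

open Matrix

/-- The `r`-circulant matrix with first row `c 0, c 1, …, c (n-1)`:
its `(i,j)` entry is `c (j - i)` if `i ≤ j` and `r * c (n + j - i)` if `j < i`. -/
def rCirc {R : Type*} [CommRing R] {n : ℕ} (r : R) (c : Fin n → R) :
    Matrix (Fin n) (Fin n) R :=
  Matrix.of fun i j =>
    if h : (i : ℕ) ≤ (j : ℕ) then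
      c ⟨(j : ℕ) - (i : ℕ), lt_of_le_of_lt (Nat.sub_le _ _) j.isLt⟩
    else r * c ⟨n + (j : ℕ) - (i : ℕ), by have hi := i.isLt; have hj := j.isLt; omega⟩


open Polynomial

/-- Key row computation: if `x ^ n = r`, then the `i`-th entry of `rCirc r c`
applied to the vector of powers of `x` is `x ^ i` times `∑ c k x ^ k`. -/
lemma rCirc_row_sum {F : Type*} [CommRing F] {n : ℕ} (hn : 0 < n) (r : F)
    (c : Fin n → F) (x : F) (hx : x ^ n = r) (i : Fin n) :
    ∑ m : Fin n, rCirc r c i m * x ^ (m : ℕ) =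
      x ^ (i : ℕ) * ∑ k : Fin n, c k * x ^ (k : ℕ) := by
  haveI : NeZero n := ⟨hn.ne'⟩
  rw [Finset.mul_sum]
  have H : ∀ k : Fin n, rCirc r c i (i + k) * x ^ ((i + k : Fin n) : ℕ) =
      x ^ (i : ℕ) * (c k * x ^ (k : ℕ)) := by
    intro k
    have hval : ((i + k : Fin n) : ℕ) = ((i : ℕ) + k) % n := by
      rw [Fin.add_def]
    have hik : (i : ℕ) + k < 2 * n := by omega
    simp only [rCirc, Matrix.of_apply]
    rcases lt_or_ge ((i : ℕ) + k) n with h | h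
    · have hv : ((i + k : Fin n) : ℕ) = (i : ℕ) + k := by
        rw [hval, Nat.mod_eq_of_lt h]
      rw [dif_pos (by rw [hv]; omega)]
      have : (⟨((i + k : Fin n) : ℕ) - (i : ℕ), by omega⟩ : Fin n) = k := by
        apply Fin.ext; simp only [hv]; omega
      rw [this, hv, pow_add]; ring
    · have hv : ((i + k : Fin n) : ℕ) = (i : ℕ) + k - n := by
        rw [hval, Nat.mod_eq_sub_mod h, Nat.mod_eq_of_lt (by omega)]
      rw [dif_neg (by rw [hv]; omega)]
      have : (⟨n + ((i + k : Fin n) : ℕ) - (i : ℕ), by omega⟩ : Fin n) = k := by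
        apply Fin.ext; simp only [hv]; omega
      rw [this]
      have hpow : x ^ ((i : ℕ) + (k : ℕ)) = r * x ^ ((i : ℕ) + k - n) := by
        rw [← hx, ← pow_add]; congr 1; omega
      rw [pow_add] at hpow
      calc r * c k * x ^ ((i + k : Fin n) : ℕ) = c k * (r * x ^ ((i : ℕ) + k - n)) := by
            rw [hv]; ring
        _ = x ^ (i : ℕ) * (c k * x ^ (k : ℕ)) := by rw [← hpow]; ring
  exact (Fintype.sum_equiv (Equiv.addLeft i) _ _ (fun k => (H k).symm)).symm

/-- over an algebraically closed field, with `Xⁿ − r` separable and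
`r ≠ 0`, the determinant of `circ_r(c₀,…,c_{n−1})` is the product of
`c₀ + c₁ω + ⋯ + c_{n−1}ω^{n−1}` over the `n`-th roots `ω` of `r`. -/
theorem det_rCirc_eq_prod_roots {F : Type*} [Field F] [IsAlgClosed F]
    {n : ℕ} (hn : 0 < n) (r : F) (hr : r ≠ 0)
    (hsep : (X ^ n - C r : F[X]).Separable) (c : Fin n → F) :
    (rCirc r c).det =
      (((X ^ n - C r : F[X]).roots).map
        (fun ω => ∑ k : Fin n, c k * ω ^ (k : ℕ))).prod := by
  set p : F[X] := X ^ n - C r with hp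
  have hpne : p ≠ 0 := by
    intro h
    have := natDegree_X_pow_sub_C (R := F) (n := n) (r := r)
    rw [← hp, h, natDegree_zero] at this
    omega
  have hcard : Multiset.card p.roots = n := by
    rw [splits_iff_card_roots.mp (IsAlgClosed.splits p)]
    exact natDegree_X_pow_sub_C
  have hnodup : p.roots.Nodup := nodup_roots hsep
  set L : List F := p.roots.toList with hL
  have hLlen : L.length = n := by
    rw [hL, Multiset.length_toList, hcard]
  have hLnodup : L.Nodup := by
    rw [hL, ← Multiset.coe_nodup, Multiset.coe_toList]; exact hnodup
  set ω : Fin n → F := fun i => L.get (Fin.cast hLlen.symm i) with hω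
  have hωinj : Function.Injective ω := by
    intro a b hab
    have := List.nodup_iff_injective_get.mp hLnodup hab
    simpa [Fin.ext_iff] using this
  have hωroot : ∀ i, (ω i) ^ n = r := by
    intro i
    have hmem : ω i ∈ p.roots := by
      rw [← Multiset.mem_toList, ← hL]
      exact List.get_mem L _
    have hroot := (mem_roots hpne).mp hmem
    have h2 : (ω i) ^ n - r = 0 := by
      simpa [hp, IsRoot, eval_sub, eval_pow, eval_X, eval_C] using hroot
    exact sub_eq_zero.mp h2
  -- rewrite the roots product as a product over `Fin n`
  have hprod : ∀ g : F → F, (p.roots.map g).prod = ∏ i : Fin n, g (ω i) := by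
    intro g
    have h1 : p.roots = (L : Multiset F) := by rw [hL, Multiset.coe_toList]
    have h2 : L = List.ofFn L.get := (List.ofFn_get L).symm
    rw [h1, Multiset.map_coe, Multiset.prod_coe]
    conv_lhs => rw [h2]
    rw [List.map_ofFn, List.prod_ofFn]
    exact Fintype.prod_equiv (finCongr hLlen) _ _ (fun i => rfl)
  rw [hprod]
  -- diagonalization
  set W : Matrix (Fin n) (Fin n) F := (Matrix.vandermonde ω)ᵀ with hW
  set d : Fin n → F := fun j => ∑ k : Fin n, c k * (ω j) ^ (k : ℕ) with hd
  have hkey : rCirc r c * W = W * Matrix.diagonal d := by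
    ext i j
    rw [Matrix.mul_apply, Matrix.mul_diagonal]
    have : ∀ m : Fin n, W m j = (ω j) ^ (m : ℕ) := fun m => rfl
    simp only [this, hW, Matrix.transpose_apply, Matrix.vandermonde]
    exact rCirc_row_sum hn r c (ω j) (hωroot j) i
  have hWdet : W.det ≠ 0 := by
    rw [hW, Matrix.det_transpose]
    exact Matrix.det_vandermonde_ne_zero_iff.mpr hωinj
  have := congrArg Matrix.det hkey
  rw [Matrix.det_mul, Matrix.det_mul, Matrix.det_diagonal] at this
  have hfinal : (rCirc r c).det = ∏ i : Fin n, d i := by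
    have h := this
    rw [mul_comm W.det (∏ i : Fin n, d i)] at h
    exact mul_right_cancel₀ hWdet h
  exact hfinal
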